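/- Let κ be an infinite regular cardinal with κ^{<κ} ≤ κ⁺. Then there exists a set M ⊆ S^{κ⁺}_κ such that: (i) M is stationary in κ⁺; (ii) M belongs to the approachability ideal I[κ⁺]; and (iii) for every stationary S ⊆ S^{κ⁺}_κ with S ∈ I[κ⁺], the set S \ M is non-stationary in κ⁺ (i.e., M is a maximum element of I[κ⁺] ∩ P(S^{κ⁺}_κ) modulo the non-stationary ideal). -/

import Mathlib

open Set Cardinal

/-- `C` is a closed unbounded subset of the ordinal `δ`. -/
def IsClubIn (δ : Ordinal.{0}) (C : Set Ordinal.{0}) : Prop :=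
  C ⊆ Set.Iio δ ∧
  (∀ α < δ, ∃ β ∈ C, α < β) ∧
  (∀ α < δ, 0 < α → (∀ β < α, ∃ γ ∈ C, β < γ ∧ γ < α) → α ∈ C)

/-- `S` is stationary in `δ`: it meets every club subset of `δ`. -/
def IsStationaryIn (δ : Ordinal.{0}) (S : Set Ordinal.{0}) : Prop :=
  ∀ C, IsClubIn δ C → (S ∩ C).Nonempty

/-- `γ` is approachable with respect to the sequence `z`: there is a strictly increasing
sequence of length `cof γ`, cofinal in `γ`, all of whose proper initial segments appear
in `z` before `γ`. -/
def Approachable (z : Ordinal.{0} → Set Ordinal.{0}) (γ : Ordinal.{0}) : Prop :=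
  ∃ f : Ordinal.{0} → Ordinal.{0},
    (∀ ξ η, ξ < η → η < γ.cof.ord → f ξ < f η) ∧
    (∀ ξ < γ.cof.ord, f ξ < γ) ∧
    (∀ β < γ, ∃ ξ < γ.cof.ord, β ≤ f ξ) ∧
    (∀ ξ < γ.cof.ord, ∃ α < γ, z α = f '' Set.Iio ξ)

/-- The set `S^{κ⁺}_κ` of ordinals below `κ⁺` of cofinality `κ`. -/
def SCof (κ : Cardinal.{0}) : Set Ordinal.{0} :=
  {γ | γ < (Order.succ κ).ord ∧ γ.cof = κ}

/-- `X` belongs to the approachability ideal `I[κ⁺]`: there are a club `D ⊆ κ⁺` and a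
sequence `u` of subsets of `κ⁺` of cardinality `< κ` such that every `γ ∈ D ∩ X` is
approachable with respect to `u`. -/
def InAppIdeal (κ : Cardinal.{0}) (X : Set Ordinal.{0}) : Prop :=
  ∃ D : Set Ordinal.{0}, ∃ u : Ordinal.{0} → Set Ordinal.{0},
    IsClubIn (Order.succ κ).ord D ∧
    (∀ α < (Order.succ κ).ord,
      u α ⊆ Set.Iio (Order.succ κ).ord ∧ #(u α) < Cardinal.lift.{1} κ) ∧
    ∀ γ ∈ D ∩ X, Approachable u γ

namespace St3

open Ordinal

lemma bdd {δ : Ordinal.{0}} (hδ : Order.IsSuccLimit δ) {s : Set Ordinal.{0}}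
    (hsub : s ⊆ Set.Iio δ) (hcard : #s < Cardinal.lift.{1} δ.cof) :
    ∃ β < δ, ∀ x ∈ s, x < β := by
  have hsm : Small.{0} s := small_subset hsub
  set f : Shrink.{0} s → Ordinal.{0} := fun i => ((equivShrink s).symm i : Ordinal) with hf
  have h1 : #(Shrink.{0} s) < δ.cof := by
    have h2 : Cardinal.lift.{1} #(Shrink.{0} s) < Cardinal.lift.{1} δ.cof := by
      rw [lift_mk_shrink']
      simpa using hcard
    exact_mod_cast Cardinal.lift_lt.1 h2
  have hsup : iSup f < δ := Ordinal.iSup_lt_ord h1 fun i => hsub (Subtype.mem _)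
  refine ⟨Order.succ (iSup f), hδ.succ_lt hsup, fun x hx => ?_⟩
  have : x ≤ iSup f := by
    have := Ordinal.le_iSup f (equivShrink s ⟨x, hx⟩)
    simpa [hf] using this
  exact this.trans_lt (Order.lt_succ _)

lemma card_family {κ : Cardinal.{0}} (hκ : ℵ₀ ≤ κ) (harith : κ ^< κ ≤ Order.succ κ)
    {β : Ordinal.{0}} (hβ : β < (Order.succ κ).ord) {μ : Cardinal.{0}} (hμ : μ < κ) :
    #{v : Set Ordinal.{0} // v ⊆ Set.Iio β ∧ #v ≤ Cardinal.lift.{1} μ} ≤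
      Cardinal.lift.{1} (Order.succ κ) := by
  refine (Cardinal.mk_bounded_subset_le (Set.Iio β) (Cardinal.lift.{1} μ)).trans ?_
  have hbase : max #(Set.Iio β) ℵ₀ ≤ Cardinal.lift.{1} κ := by
    refine max_le ?_ (by simpa using hκ)
    rw [Ordinal.mk_Iio_ordinal]
    refine Cardinal.lift_le.2 ?_
    exact Order.lt_succ_iff.1 (Cardinal.lt_ord.1 hβ)
  calc max #(Set.Iio β) ℵ₀ ^ Cardinal.lift.{1} μ
      ≤ Cardinal.lift.{1} κ ^ Cardinal.lift.{1} μ := Cardinal.power_le_power_right hbase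
    _ = Cardinal.lift.{1} (κ ^ μ) := (Cardinal.lift_power κ μ).symm
    _ ≤ Cardinal.lift.{1} (κ ^< κ) := Cardinal.lift_le.2 (Cardinal.le_powerlt κ hμ)
    _ ≤ Cardinal.lift.{1} (Order.succ κ) := Cardinal.lift_le.2 harith

lemma club_Iio {δ : Ordinal.{0}} (hδ : Order.IsSuccLimit δ) : IsClubIn δ (Set.Iio δ) :=
  ⟨subset_rfl, fun α hα => ⟨Order.succ α, hδ.succ_lt hα, Order.lt_succ α⟩,
    fun α hα _ _ => hα⟩

lemma club_inter {δ : Ordinal.{0}} (hℵ : ℵ₀ < δ.cof)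
    {C D : Set Ordinal.{0}} (hC : IsClubIn δ C) (hD : IsClubIn δ D) :
    IsClubIn δ (C ∩ D) := by
  classical
  have key : ∀ α < δ, ∃ γ ∈ C ∩ D, α < γ := by
    intro α hα
    have hCd : ∀ a, a < δ → ∃ b, b ∈ C ∧ a < b := fun a ha => by
      obtain ⟨b, hb, hab⟩ := hC.2.1 a ha; exact ⟨b, hb, hab⟩
    have hDd : ∀ a, a < δ → ∃ b, b ∈ D ∧ a < b := fun a ha => by
      obtain ⟨b, hb, hab⟩ := hD.2.1 a ha; exact ⟨b, hb, hab⟩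
    set nC : Ordinal.{0} → Ordinal.{0} :=
      fun a => if h : a < δ then (hCd a h).choose else 0 with hnCdef
    set nD : Ordinal.{0} → Ordinal.{0} :=
      fun a => if h : a < δ then (hDd a h).choose else 0 with hnDdef
    have hnC : ∀ a, a < δ → nC a ∈ C ∧ a < nC a := fun a h => by
      simp only [hnCdef, dif_pos h]; exact (hCd a h).choose_spec
    have hnD : ∀ a, a < δ → nD a ∈ D ∧ a < nD a := fun a h => by
      simp only [hnDdef, dif_pos h]; exact (hDd a h).choose_spec
    set x : ℕ → Ordinal.{0} := fun n => Nat.rec (nC α) (fun _ b => nC (nD b)) n with hx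
    have hx0 : x 0 = nC α := rfl
    have hxs : ∀ n, x (n + 1) = nC (nD (x n)) := fun n => rfl
    have hxC : ∀ n, x n ∈ C ∧ x n < δ := by
      intro n
      induction n with
      | zero => have := (hnC α hα).1; exact ⟨this, hC.1 this⟩
      | succ n ih =>
        have hyD : nD (x n) ∈ D := (hnD _ ih.2).1
        have hyδ : nD (x n) < δ := hD.1 hyD
        have := (hnC _ hyδ).1
        rw [hxs]; exact ⟨this, hC.1 this⟩
    have hxy : ∀ n, x n < nD (x n) := fun n => (hnD _ (hxC n).2).2
    have hyx : ∀ n, nD (x n) < x (n + 1) := fun n => by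
      rw [hxs]; exact (hnC _ (hD.1 (hnD _ (hxC n).2).1)).2
    have hmono : ∀ n, x n < x (n + 1) := fun n => (hxy n).trans (hyx n)
    set γ := iSup x with hγ
    have hγδ : γ < δ := by
      refine Ordinal.iSup_lt_ord ?_ fun n => (hxC n).2
      rw [Cardinal.mk_nat]; exact hℵ
    have hle : ∀ n, x n ≤ γ := fun n => Ordinal.le_iSup x n
    have hltγ : ∀ n, x n < γ := fun n => lt_of_lt_of_le (hmono n) (hle (n + 1))
    have hγpos : 0 < γ := lt_of_le_of_lt (zero_le (a := _)) (hltγ 0)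
    have hbe : ∀ β < γ, ∃ n, β < x n := fun β hβ => Ordinal.lt_iSup_iff.1 hβ
    have hγC : γ ∈ C := by
      refine hC.2.2 γ hγδ hγpos fun β hβ => ?_
      obtain ⟨n, hn⟩ := hbe β hβ
      exact ⟨x n, (hxC n).1, hn, hltγ n⟩
    have hγD : γ ∈ D := by
      refine hD.2.2 γ hγδ hγpos fun β hβ => ?_
      obtain ⟨n, hn⟩ := hbe β hβ
      exact ⟨nD (x n), (hnD _ (hxC n).2).1, hn.trans (hxy n),
        (hyx n).trans_le (hle (n + 1))⟩
    exact ⟨γ, ⟨hγC, hγD⟩, lt_of_lt_of_le (hnC α hα).2 (hle 0)⟩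
  refine ⟨fun x hx => hC.1 hx.1, key, fun α hα h0 hcl => ?_⟩
  constructor
  · exact hC.2.2 α hα h0 fun β hβ => by
      obtain ⟨γ, hγ, h1, h2⟩ := hcl β hβ; exact ⟨γ, hγ.1, h1, h2⟩
  · exact hD.2.2 α hα h0 fun β hβ => by
      obtain ⟨γ, hγ, h1, h2⟩ := hcl β hβ; exact ⟨γ, hγ.2, h1, h2⟩

lemma club_fn {δ : Ordinal.{0}} (hδ : Order.IsSuccLimit δ) (hℵ : ℵ₀ < δ.cof)
    (hcard : ∀ a, a < δ → a.card < δ.cof)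
    (g : Ordinal.{0} → Ordinal.{0}) (hg : ∀ α < δ, g α < δ) :
    IsClubIn δ {γ | γ < δ ∧ ∀ α < γ, g α < γ} := by
  classical
  refine ⟨fun x hx => hx.1, ?_, fun α hα h0 hcl => ⟨hα, fun ζ hζ => ?_⟩⟩
  · intro α hα
    set x : ℕ → Ordinal.{0} := fun n => Nat.rec (Order.succ α)
      (fun _ b => max (Ordinal.bsup b (fun β _ => Order.succ (g β))) (Order.succ b)) n with hx
    have hxs : ∀ n, x (n + 1) =
        max (Ordinal.bsup (x n) (fun β _ => Order.succ (g β))) (Order.succ (x n)) :=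
      fun n => rfl
    have hxδ : ∀ n, x n < δ := by
      intro n
      induction n with
      | zero => exact hδ.succ_lt hα
      | succ n ih =>
        rw [hxs]
        refine max_lt ?_ (hδ.succ_lt ih)
        refine Ordinal.bsup_lt_ord (hcard _ ih) fun β hβ => ?_
        exact hδ.succ_lt (hg β (hβ.trans ih))
    have hmono : ∀ n, x n < x (n + 1) := fun n => by
      rw [hxs]; exact lt_of_lt_of_le (Order.lt_succ _) (le_max_right _ _)
    set γ := iSup x with hγ
    have hγδ : γ < δ := by
      refine Ordinal.iSup_lt_ord ?_ fun n => hxδ n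
      rw [Cardinal.mk_nat]; exact hℵ
    have hle : ∀ n, x n ≤ γ := fun n => Ordinal.le_iSup x n
    refine ⟨γ, ⟨hγδ, fun ζ hζ => ?_⟩, lt_of_lt_of_le (Order.lt_succ α) (hle 0)⟩
    obtain ⟨n, hn⟩ := Ordinal.lt_iSup_iff.1 hζ
    have h1 : Order.succ (g ζ) ≤ Ordinal.bsup (x n) (fun β _ => Order.succ (g β)) :=
      Ordinal.le_bsup (fun β (_ : β < x n) => Order.succ (g β)) ζ hn
    have h2 : g ζ < x (n + 1) := by
      rw [hxs]
      exact lt_of_lt_of_le (lt_of_lt_of_le (Order.lt_succ _) h1) (le_max_left _ _)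
    exact h2.trans_le (hle (n + 1))
  · obtain ⟨γ', hγ', h1, h2⟩ := hcl ζ hζ
    exact (hγ'.2 ζ h1).trans h2

def stepCond (C : Set Ordinal.{0}) (u : Ordinal.{0} → Set Ordinal.{0}) (ξ : Ordinal.{0})
    (ih : ∀ η, η < ξ → Ordinal.{0}) : Prop :=
  ∃ c, c ∈ C ∧ (∀ η (hη : η < ξ), ih η hη < c) ∧
    ∃ α, α < c ∧ u α = {x | ∃ η, ∃ hη : η < ξ, ih η hη = x}

open scoped Classical in
noncomputable def seqE (C : Set Ordinal.{0}) (u : Ordinal.{0} → Set Ordinal.{0}) :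
    Ordinal.{0} → Ordinal.{0} :=
  Ordinal.lt_wf.fix fun ξ ih => if h : stepCond C u ξ ih then h.choose else 0

open scoped Classical in
lemma seqE_eq (C : Set Ordinal.{0}) (u : Ordinal.{0} → Set Ordinal.{0}) (ξ : Ordinal.{0}) :
    seqE C u ξ = if h : stepCond C u ξ (fun η _ => seqE C u η) then h.choose else 0 :=
  WellFounded.fix_eq _ _ _

lemma seqE_spec (C : Set Ordinal.{0}) (u : Ordinal.{0} → Set Ordinal.{0}) (ξ : Ordinal.{0})
    (h : stepCond C u ξ (fun η _ => seqE C u η)) :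
    seqE C u ξ ∈ C ∧ (∀ η, η < ξ → seqE C u η < seqE C u ξ) ∧
      ∃ α, α < seqE C u ξ ∧ u α = seqE C u '' Set.Iio ξ := by
  have himg : {x | ∃ η, ∃ hη : η < ξ, seqE C u η = x} = seqE C u '' Set.Iio ξ := by
    ext x; simp [Set.mem_image]
  rw [seqE_eq C u ξ, dif_pos h]
  obtain ⟨h1, h2, α, h3, h4⟩ := h.choose_spec
  exact ⟨h1, fun η hη => h2 η hη, α, h3, by rw [← himg]; exact h4⟩

lemma approach_point {κ : Cardinal.{0}} (hκ : ℵ₀ ≤ κ) (hreg : κ.IsRegular)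
    (u : Ordinal.{0} → Set Ordinal.{0})
    (husurj : ∀ s : Set Ordinal.{0}, s ⊆ Set.Iio (Order.succ κ).ord →
      Cardinal.mk s < Cardinal.lift.{1} κ → ∃ α < (Order.succ κ).ord, u α = s)
    {C : Set Ordinal.{0}} (hC : IsClubIn (Order.succ κ).ord C) :
    ∃ γ ∈ C, γ < (Order.succ κ).ord ∧ γ.cof = κ ∧ Approachable u γ := by
  classical
  set δ := (Order.succ κ).ord with hδdef
  have hδlim : Order.IsSuccLimit δ := Cardinal.isSuccLimit_ord (hκ.trans (Order.le_succ κ))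
  have hcofδ : δ.cof = Order.succ κ := (Cardinal.isRegular_succ hκ).cof_eq
  have hκlim : Order.IsSuccLimit κ.ord := Cardinal.isSuccLimit_ord hκ
  set e := seqE C u with he
  have claim : ∀ ξ, ξ < κ.ord → e ξ ∈ C ∧ (∀ η, η < ξ → e η < e ξ) ∧
      ∃ α, α < e ξ ∧ u α = e '' Set.Iio ξ := by
    intro ξ
    induction ξ using Ordinal.induction with
    | h ξ IH =>
      intro hξ
      have hcond : stepCond C u ξ (fun η _ => e η) := by
        have hsub : e '' Set.Iio ξ ⊆ Set.Iio δ := by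
          rintro x ⟨η, hη, rfl⟩
          exact hC.1 (IH η hη (hη.trans hξ)).1
        have hcard2 : #(e '' Set.Iio ξ) < Cardinal.lift.{1} κ := by
          refine Cardinal.mk_image_le.trans_lt ?_
          rw [Ordinal.mk_Iio_ordinal]
          exact Cardinal.lift_lt.2 (Cardinal.lt_ord.1 hξ)
        obtain ⟨α, hαδ, hα⟩ := husurj _ hsub hcard2
        have hbs : Ordinal.bsup ξ (fun η _ => Order.succ (e η)) < δ := by
          refine Ordinal.bsup_lt_ord ?_ fun η hη =>
            hδlim.succ_lt (hC.1 (IH η hη (hη.trans hξ)).1)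
          rw [hcofδ]
          exact (Cardinal.lt_ord.1 hξ).trans (Order.lt_succ κ)
        have hm : max (Ordinal.bsup ξ fun η _ => Order.succ (e η)) (Order.succ α) < δ :=
          max_lt hbs (hδlim.succ_lt hαδ)
        obtain ⟨c, hcC, hmc⟩ := hC.2.1 _ hm
        refine ⟨c, hcC, fun η hη => ?_, α, ?_, ?_⟩
        · exact ((Order.lt_succ (e η)).trans_le
            ((Ordinal.le_bsup _ η hη).trans (le_max_left _ _))).trans hmc
        · exact ((Order.lt_succ α).trans_le (le_max_right _ _)).trans hmc
        · rw [hα]; ext x; simp [Set.mem_image]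
      exact seqE_spec C u ξ hcond
  set γ := Ordinal.bsup κ.ord (fun ξ _ => e ξ) with hγ
  have heC : ∀ ξ, ξ < κ.ord → e ξ ∈ C := fun ξ h => (claim ξ h).1
  have heδ : ∀ ξ, ξ < κ.ord → e ξ < δ := fun ξ h => hC.1 (heC ξ h)
  have heγ : ∀ ξ, ξ < κ.ord → e ξ < γ := fun ξ h => by
    have hs : Order.succ ξ < κ.ord := hκlim.succ_lt h
    exact lt_of_lt_of_le ((claim _ hs).2.1 ξ (Order.lt_succ ξ))
      (Ordinal.le_bsup (fun ξ _ => e ξ) _ hs)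
  have hγδ : γ < δ := by
    refine Ordinal.bsup_lt_ord ?_ fun ξ h => heδ ξ h
    rw [Cardinal.card_ord, hcofδ]; exact Order.lt_succ κ
  have hcofinal : ∀ β, β < γ → ∃ ξ, ξ < κ.ord ∧ β ≤ e ξ := by
    intro β hβ
    obtain ⟨ξ, hξ, hb⟩ := (Ordinal.lt_bsup _).1 hβ
    exact ⟨ξ, hξ, hb.le⟩
  have hγpos : 0 < γ := lt_of_le_of_lt (zero_le (a := e 0)) (heγ 0 hκlim.pos)
  have hγC : γ ∈ C := by
    refine hC.2.2 γ hγδ hγpos fun β hβ => ?_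
    obtain ⟨ξ, hξ, hb⟩ := (Ordinal.lt_bsup _).1 hβ
    exact ⟨e ξ, heC ξ hξ, hb, heγ ξ hξ⟩
  have hcof : γ.cof = κ := by
    refine le_antisymm ?_ ?_
    · have h := Ordinal.cof_bsup_le (o := κ.ord) (f := fun ξ _ => e ξ) (fun i h => heγ i h)
      rwa [Cardinal.card_ord] at h
    · refine Ordinal.le_cof_iff_lsub.2 fun {ι} f hf => ?_
      have hfi : ∀ i, f i < γ := fun i => hf ▸ Ordinal.lt_lsub f i
      choose g hg1 hg2 using fun i => hcofinal (f i) (hfi i)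
      have hlsub : Ordinal.lsub g = κ.ord := by
        refine le_antisymm (Ordinal.lsub_le_iff.2 fun i => hg1 i) ?_
        by_contra hcon
        push_neg at hcon
        have h1 : e (Ordinal.lsub g) < γ := heγ _ hcon
        rw [← hf] at h1
        obtain ⟨i, hi⟩ := Ordinal.lt_lsub_iff.1 h1
        have h2 : e (Ordinal.lsub g) ≤ e (g i) := hi.trans (hg2 i)
        have h3 : Ordinal.lsub g ≤ g i := by
          by_contra h4
          push_neg at h4
          exact absurd ((claim _ hcon).2.1 (g i) h4) (not_lt.2 h2)
        exact (h3.trans_lt (Ordinal.lt_lsub g i)).false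
      have h5 := Ordinal.cof_lsub_le g
      rwa [hlsub, hreg.cof_eq] at h5
  have hco : γ.cof.ord = κ.ord := by rw [hcof]
  refine ⟨γ, hγC, hγδ, hcof, e, ?_, ?_, ?_, ?_⟩
  · intro ξ η hlt hη
    exact (claim η (by rwa [hco] at hη)).2.1 ξ hlt
  · intro ξ hξ; exact heγ ξ (by rwa [hco] at hξ)
  · intro β hβ
    obtain ⟨ξ, h1, h2⟩ := hcofinal β hβ
    exact ⟨ξ, by rwa [← hco] at h1, h2⟩
  · intro ξ hξ
    obtain ⟨α, h1, h2⟩ := (claim ξ (by rwa [hco] at hξ)).2.2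
    exact ⟨α, h1.trans (heγ ξ (by rwa [hco] at hξ)), h2⟩

lemma enum {κ : Cardinal.{0}} (hκ : ℵ₀ ≤ κ) (harith : κ ^< κ ≤ Order.succ κ) :
    ∃ u : Ordinal.{0} → Set Ordinal.{0},
      (∀ α, u α ⊆ Set.Iio (Order.succ κ).ord ∧ #(u α) < Cardinal.lift.{1} κ) ∧
      (∀ s : Set Ordinal.{0}, s ⊆ Set.Iio (Order.succ κ).ord → #s < Cardinal.lift.{1} κ →
        ∃ α < (Order.succ κ).ord, u α = s) := by
  classical
  set δ := (Order.succ κ).ord with hδdef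
  have hδlim : Order.IsSuccLimit δ := Cardinal.isSuccLimit_ord (hκ.trans (Order.le_succ κ))
  have hcofδ : δ.cof = Order.succ κ := (Cardinal.isRegular_succ hκ).cof_eq
  set T := {s : Set Ordinal.{0} // s ⊆ Set.Iio δ ∧ #s < Cardinal.lift.{1} κ} with hT
  -- the index type
  set I := (Set.Iio δ) × {μ : Cardinal.{0} // μ < κ} with hI
  -- a surjection from a sigma type onto T
  have hTle : #T ≤ Cardinal.lift.{1} (Order.succ κ) := by
    have hsurj : ∃ Ψ : (Σ p : I, {v : Set Ordinal.{0} // v ⊆ Set.Iio p.1.1 ∧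
        Cardinal.mk v ≤ Cardinal.lift.{1} p.2.1}) → T, Function.Surjective Ψ := by
      refine ⟨fun q => ⟨q.2.1, fun x hx => Set.mem_Iio.2
        ((Set.mem_Iio.1 (q.2.2.1 hx)).trans q.1.1.2),
        q.2.2.2.trans_lt (Cardinal.lift_lt.2 q.1.2.2)⟩, ?_⟩
      rintro ⟨s, hs1, hs2⟩
      have hcc : #s < Cardinal.lift.{1} δ.cof := by
        rw [hcofδ]; exact hs2.trans_le (Cardinal.lift_le.2 (Order.le_succ κ))
      obtain ⟨β, hβδ, hβ⟩ := bdd hδlim hs1 hcc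
      obtain ⟨μ, hμeq⟩ := Cardinal.mem_range_lift_of_le hs2.le
      have hμκ : μ < κ := by
        rw [← Cardinal.lift_lt.{_, 1}, hμeq]; exact hs2
      refine ⟨⟨⟨⟨β, hβδ⟩, ⟨μ, hμκ⟩⟩, ⟨s, fun x hx => hβ x hx, by rw [hμeq]⟩⟩, rfl⟩
    obtain ⟨Ψ, hΨ⟩ := hsurj
    refine (Cardinal.mk_le_of_surjective hΨ).trans ?_
    rw [Cardinal.mk_sigma]
    calc (Cardinal.sum fun p : I => #{v : Set Ordinal.{0} // v ⊆ Set.Iio p.1.1 ∧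
            Cardinal.mk v ≤ Cardinal.lift.{1} p.2.1})
        ≤ Cardinal.sum fun _ : I => Cardinal.lift.{1} (Order.succ κ) :=
          Cardinal.sum_le_sum _ _ fun p => card_family hκ harith p.1.2 p.2.2
      _ = #I * Cardinal.lift.{1} (Order.succ κ) := Cardinal.sum_const' _ _
      _ ≤ Cardinal.lift.{1} (Order.succ κ) := by
          have h1 : #(Set.Iio δ) = Cardinal.lift.{1} (Order.succ κ) := by
            rw [Ordinal.mk_Iio_ordinal, Cardinal.card_ord]
          have h2 : #{μ : Cardinal.{0} // μ < κ} ≤ Cardinal.lift.{1} (Order.succ κ) := by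
            refine (Cardinal.mk_le_of_injective (f := fun μ : {μ : Cardinal.{0} // μ < κ} =>
              (⟨μ.1.ord, Cardinal.ord_lt_ord.2 (μ.2.trans (Order.lt_succ κ))⟩ : Set.Iio δ)) ?_).trans h1.le
            intro a b hab
            exact Subtype.ext (Cardinal.ord_injective (congrArg Subtype.val hab))
          have hinf : ℵ₀ ≤ Cardinal.lift.{1} (Order.succ κ) := by
            rw [← Cardinal.lift_aleph0.{1, 0}]
            exact Cardinal.lift_le.2 (hκ.trans (Order.le_succ κ))
          have h3 : #I ≤ Cardinal.lift.{1} (Order.succ κ) := by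
            calc #I = #(Set.Iio δ) * #{μ : Cardinal.{0} // μ < κ} := by
                    rw [hI, Cardinal.mk_prod, Cardinal.lift_id, Cardinal.lift_id]
              _ ≤ Cardinal.lift.{1} (Order.succ κ) * Cardinal.lift.{1} (Order.succ κ) :=
                    mul_le_mul' h1.le h2
              _ = Cardinal.lift.{1} (Order.succ κ) := Cardinal.mul_eq_self hinf
          calc #I * Cardinal.lift.{1} (Order.succ κ)
              ≤ Cardinal.lift.{1} (Order.succ κ) * Cardinal.lift.{1} (Order.succ κ) :=
                mul_le_mul' h3 le_rfl
            _ = Cardinal.lift.{1} (Order.succ κ) := Cardinal.mul_eq_self hinf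
  -- get an injection of T into Iio δ
  have hIio : #(Set.Iio δ) = Cardinal.lift.{1} (Order.succ κ) := by
    rw [Ordinal.mk_Iio_ordinal, Cardinal.card_ord]
  obtain ⟨g⟩ : Nonempty (T ↪ Set.Iio δ) := by
    rw [← Cardinal.le_def, hIio]; exact hTle
  set u : Ordinal.{0} → Set Ordinal.{0} := fun α =>
    if h : ∃ t : T, ((g t : Set.Iio δ) : Ordinal.{0}) = α then h.choose.1 else ∅ with hu
  refine ⟨u, fun α => ?_, fun s hs1 hs2 => ?_⟩
  · by_cases h : ∃ t : T, ((g t : Set.Iio δ) : Ordinal.{0}) = α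
    · simp only [hu, dif_pos h]
      exact ⟨h.choose.2.1, h.choose.2.2⟩
    · simp only [hu, dif_neg h]
      refine ⟨Set.empty_subset _, ?_⟩
      rw [Cardinal.mk_emptyCollection]
      exact (Cardinal.aleph0_pos.trans_le (by
        rw [← Cardinal.lift_aleph0.{1, 0}]; exact Cardinal.lift_le.2 hκ))
  · set t : T := ⟨s, hs1, hs2⟩ with ht
    refine ⟨(g t : Set.Iio δ), (g t).2, ?_⟩
    have h : ∃ t' : T, ((g t' : Set.Iio δ) : Ordinal.{0}) = ((g t : Set.Iio δ) : Ordinal.{0}) :=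
      ⟨t, rfl⟩
    simp only [hu, dif_pos h]
    have hct : h.choose = t := g.injective (Subtype.ext h.choose_spec)
    rw [hct]

end St3

theorem statement3 (κ : Cardinal.{0}) (hκ : ℵ₀ ≤ κ) (hreg : κ.IsRegular)
    (harith : κ ^< κ ≤ Order.succ κ) :
    ∃ M : Set Ordinal.{0}, M ⊆ SCof κ ∧
      IsStationaryIn (Order.succ κ).ord M ∧
      InAppIdeal κ M ∧
      ∀ S ⊆ SCof κ, IsStationaryIn (Order.succ κ).ord S → InAppIdeal κ S →
        ¬ IsStationaryIn (Order.succ κ).ord (S \ M) := by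
  classical
  obtain ⟨u, hu1, hu2⟩ := St3.enum hκ harith
  set δ := (Order.succ κ).ord with hδdef
  have hδlim : Order.IsSuccLimit δ := Cardinal.isSuccLimit_ord (hκ.trans (Order.le_succ κ))
  have hcofδ : δ.cof = Order.succ κ := (Cardinal.isRegular_succ hκ).cof_eq
  have hℵ : ℵ₀ < δ.cof := by rw [hcofδ]; exact hκ.trans_lt (Order.lt_succ κ)
  refine ⟨{γ | γ ∈ SCof κ ∧ Approachable u γ}, fun γ h => h.1, ?_, ?_, ?_⟩
  · intro C hCclub
    obtain ⟨γ, hγC, hγδ, hγcof, happ⟩ := St3.approach_point hκ hreg u hu2 hCclub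
    exact ⟨γ, ⟨⟨hγδ, hγcof⟩, happ⟩, hγC⟩
  · exact ⟨Set.Iio δ, u, St3.club_Iio hδlim, fun α _ => hu1 α, fun γ hγ => hγ.2.2⟩
  · intro S hS hSstat hSideal hstat
    obtain ⟨D, u', hDclub, hu', happr⟩ := hSideal
    set gfun : Ordinal.{0} → Ordinal.{0} := fun α =>
      if h : ∃ β, β < δ ∧ u β = u' α then h.choose else 0 with hgfun
    have hg : ∀ α, α < δ → gfun α < δ ∧ u (gfun α) = u' α := by
      intro α hα
      have h : ∃ β, β < δ ∧ u β = u' α := by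
        obtain ⟨hsub, hcard⟩ := hu' α hα
        obtain ⟨β, hβ1, hβ2⟩ := hu2 (u' α) hsub hcard
        exact ⟨β, hβ1, hβ2⟩
      simp only [hgfun, dif_pos h]
      exact h.choose_spec
    have hgδ : ∀ α, α < δ → gfun α < δ := fun α h => (hg α h).1
    have hcard : ∀ a, a < δ → a.card < δ.cof := fun a ha => by
      rw [hcofδ]; exact Cardinal.lt_ord.1 ha
    have hE : IsClubIn δ {γ | γ < δ ∧ ∀ α < γ, gfun α < γ} :=
      St3.club_fn hδlim hℵ hcard gfun hgδ
    have hDE : IsClubIn δ (D ∩ {γ | γ < δ ∧ ∀ α < γ, gfun α < γ}) :=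
      St3.club_inter hℵ hDclub hE
    obtain ⟨γ, hγ1, hγ2⟩ := hstat _ hDE
    refine hγ1.2 ?_
    have hγS := hγ1.1
    have hγSC : γ ∈ SCof κ := hS hγS
    obtain ⟨f, h1, h2, h3, h4⟩ := happr γ ⟨hγ2.1, hγS⟩
    refine ⟨hγSC, f, h1, h2, h3, fun ξ hξ => ?_⟩
    obtain ⟨α, hαγ, hαeq⟩ := h4 ξ hξ
    have hαδ : α < δ := hαγ.trans hγSC.1
    exact ⟨gfun α, hγ2.2.2 α hαγ, by rw [(hg α hαδ).2, hαeq]⟩
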